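/- Let X and Y be compact, locally connected Hausdorff topological spaces and let G and H be free abelian groups. The ℤ-bilinear map (f, g) ↦ ((x, y) ↦ f(x) ⊗ g(y)) from LocallyConstant X G × LocallyConstant Y H to LocallyConstant (X × Y) (G ⊗_ℤ H) induces a ℤ-linear map (LocallyConstant X G) ⊗_ℤ (LocallyConstant Y H) → LocallyConstant (X × Y) (G ⊗_ℤ H), and this map is an isomorphism of abelian groups. -/

import Mathlib

open scoped TensorProduct

section Aux

variable {Z : Type*} [TopologicalSpace Z] [LocallyConnectedSpace Z]

/-- In a locally connected space, the preimage under the quotient map to connected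
components of any set is open. -/
lemma aux_isOpen_mk_preimage (S : Set (ConnectedComponents Z)) :
    IsOpen (ConnectedComponents.mk ⁻¹' S) := by
  rw [isOpen_iff_mem_nhds]
  intro x hx
  refine mem_nhds_iff.2 ⟨connectedComponent x, ?_, isOpen_connectedComponent,
    mem_connectedComponent⟩
  intro y hy
  have hyx : (ConnectedComponents.mk y : ConnectedComponents Z) = ConnectedComponents.mk x :=
    ConnectedComponents.coe_eq_coe'.2 hy
  show ConnectedComponents.mk y ∈ S
  rw [hyx]
  exact hx

lemma aux_const_of_rel {M : Type*} (f : LocallyConstant Z M) {x y : Z}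
    (h : connectedComponent x = connectedComponent y) : f x = f y :=
  f.apply_eq_of_isPreconnected isPreconnected_connectedComponent
    (h ▸ mem_connectedComponent) mem_connectedComponent

variable (Z) (M : Type*) [AddCommGroup M]

/-- Locally constant functions on a locally connected space are the functions on the
set of connected components. -/
noncomputable def lcEquiv : LocallyConstant Z M ≃ₗ[ℤ] (ConnectedComponents Z → M) where
  toFun f c := Quotient.liftOn' c f (fun _ _ hxy => aux_const_of_rel f hxy)
  invFun g := ⟨g ∘ ConnectedComponents.mk, fun s => aux_isOpen_mk_preimage (g ⁻¹' s)⟩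
  map_add' f g := by
    funext c
    induction c using Quotient.inductionOn' with
    | h x => rfl
  map_smul' z f := by
    funext c
    induction c using Quotient.inductionOn' with
    | h x => rfl
  left_inv f := by ext x; rfl
  right_inv g := by
    funext c
    induction c using Quotient.inductionOn' with
    | h x => rfl

@[simp] lemma lcEquiv_apply_mk (f : LocallyConstant Z M) (x : Z) :
    lcEquiv Z M f (ConnectedComponents.mk x) = f x := rfl

variable {W : Type*} [TopologicalSpace W] [LocallyConnectedSpace W]

lemma aux_prod_rel (h : LocallyConstant (Z × W) M) (x x' : Z) (y y' : W)
    (hx : connectedComponent x = connectedComponent x')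
    (hy : connectedComponent y = connectedComponent y') :
    h (x, y) = h (x', y') := by
  have h1 : h (x, y) = h (x', y) :=
    h.apply_eq_of_isPreconnected
      (isPreconnected_connectedComponent.prod isPreconnected_singleton)
      (Set.mk_mem_prod (hx ▸ mem_connectedComponent) rfl)
      (Set.mk_mem_prod mem_connectedComponent rfl)
  have h2 : h (x', y) = h (x', y') :=
    h.apply_eq_of_isPreconnected
      (isPreconnected_singleton.prod isPreconnected_connectedComponent)
      (Set.mk_mem_prod rfl (hy ▸ mem_connectedComponent))
      (Set.mk_mem_prod rfl mem_connectedComponent)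
  exact h1.trans h2

variable (W)

/-- Locally constant functions on a product of locally connected spaces correspond to
functions on the product of the sets of connected components. -/
noncomputable def lcProdEquiv : LocallyConstant (Z × W) M ≃ₗ[ℤ]
    (ConnectedComponents Z × ConnectedComponents W → M) where
  toFun h c := Quotient.liftOn₂' c.1 c.2 (fun x y => h (x, y))
    (fun x y x' y' hx hy => aux_prod_rel Z M h x x' y y' hx hy)
  invFun F := ⟨fun p => F (ConnectedComponents.mk p.1, ConnectedComponents.mk p.2), by
    have h1 : IsLocallyConstant (fun p : Z × W => ConnectedComponents.mk p.1) :=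
      fun s => (aux_isOpen_mk_preimage s).preimage continuous_fst
    have h2 : IsLocallyConstant (fun p : Z × W => ConnectedComponents.mk p.2) :=
      fun s => (aux_isOpen_mk_preimage s).preimage continuous_snd
    exact h1.comp₂ h2 (fun i j => F (i, j))⟩
  map_add' f g := by
    funext c
    obtain ⟨c1, c2⟩ := c
    induction c1, c2 using Quotient.inductionOn₂' with
    | h x y => rfl
  map_smul' z f := by
    funext c
    obtain ⟨c1, c2⟩ := c
    induction c1, c2 using Quotient.inductionOn₂' with
    | h x y => rfl
  left_inv h := by ext ⟨x, y⟩; rfl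
  right_inv F := by
    funext c
    obtain ⟨c1, c2⟩ := c
    induction c1, c2 using Quotient.inductionOn₂' with
    | h x y => rfl

@[simp] lemma lcProdEquiv_symm_apply (F : ConnectedComponents Z × ConnectedComponents W → M)
    (x : Z) (y : W) :
    (lcProdEquiv Z M W).symm F (x, y) =
      F (ConnectedComponents.mk x, ConnectedComponents.mk y) := rfl

/-- Connected components of a compact locally connected space are finite in number. -/
lemma aux_finite_cc (Z : Type*) [TopologicalSpace Z] [LocallyConnectedSpace Z]
    [CompactSpace Z] : Finite (ConnectedComponents Z) := by
  haveI : DiscreteTopology (ConnectedComponents Z) := by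
    rw [discreteTopology_iff_forall_isOpen]
    intro s
    rw [← ConnectedComponents.isQuotientMap_coe.isOpen_preimage]
    exact aux_isOpen_mk_preimage s
  haveI : CompactSpace (ConnectedComponents Z) :=
    ⟨by rw [← ConnectedComponents.range_coe]
        exact isCompact_range ConnectedComponents.continuous_coe⟩
  exact finite_of_compact_of_discrete

end Aux

/-- **Equation (4.4) (tensor product of sections, Proposition 4.28).** Let `X`, `Y` be
compact, locally connected Hausdorff spaces and `G`, `H` free abelian groups. The
ℤ-bilinear map `(f, g) ↦ ((x, y) ↦ f x ⊗ g y)` induces a ℤ-linear map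
`(LocallyConstant X G) ⊗ℤ (LocallyConstant Y H) → LocallyConstant (X × Y) (G ⊗ℤ H)`,
and this map is an isomorphism of abelian groups. -/
theorem stmt8 (X Y : Type*) [TopologicalSpace X] [TopologicalSpace Y]
    [CompactSpace X] [CompactSpace Y] [T2Space X] [T2Space Y]
    [LocallyConnectedSpace X] [LocallyConnectedSpace Y]
    (G H : Type*) [AddCommGroup G] [AddCommGroup H]
    [Module.Free ℤ G] [Module.Free ℤ H] :
    ∃ Φ : (LocallyConstant X G) ⊗[ℤ] (LocallyConstant Y H) →ₗ[ℤ]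
        LocallyConstant (X × Y) (G ⊗[ℤ] H),
      (∀ (f : LocallyConstant X G) (g : LocallyConstant Y H) (x : X) (y : Y),
        Φ (f ⊗ₜ[ℤ] g) (x, y) = f x ⊗ₜ[ℤ] g y) ∧
      Function.Bijective Φ := by
  classical
  haveI : Finite (ConnectedComponents X) := aux_finite_cc X
  haveI : Finite (ConnectedComponents Y) := aux_finite_cc Y
  let Ψ : (LocallyConstant X G) ⊗[ℤ] (LocallyConstant Y H) ≃ₗ[ℤ]
      LocallyConstant (X × Y) (G ⊗[ℤ] H) :=
    (TensorProduct.congr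
        ((lcEquiv X G).trans (Finsupp.linearEquivFunOnFinite ℤ G (ConnectedComponents X)).symm)
        ((lcEquiv Y H).trans
          (Finsupp.linearEquivFunOnFinite ℤ H (ConnectedComponents Y)).symm)).trans
      ((finsuppTensorFinsupp ℤ ℤ G H (ConnectedComponents X) (ConnectedComponents Y)).trans
        ((Finsupp.linearEquivFunOnFinite ℤ (G ⊗[ℤ] H)
            (ConnectedComponents X × ConnectedComponents Y)).trans
          (lcProdEquiv X (G ⊗[ℤ] H) Y).symm))
  refine ⟨Ψ.toLinearMap, ?_, Ψ.bijective⟩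
  intro f g x y
  show Ψ (f ⊗ₜ[ℤ] g) (x, y) = f x ⊗ₜ[ℤ] g y
  simp only [Ψ, LinearEquiv.trans_apply, TensorProduct.congr_tmul]
  erw [finsuppTensorFinsupp_apply]
  rfl
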